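/- Let W be a symmetric brace algebra over k, let W′ be a ℤ-graded k-vector space, and let A : W′ → W and C : W → W′ be degree-0 linear maps with C∘A = id_{W′} such that for all homogeneous θ, φ ∈ W one has (A(C(θ)))⟨φ⟩ = 0 and C(θ⟨A(C(φ))⟩) = C(θ⟨φ⟩). For Φ ∈ W and F_1,…,F_n ∈ W′ define the brace Φ[F_1,…,F_n] := C(Φ⟨A(F_1),…,A(F_n)⟩) ∈ W′. Then Φ[F_1,…,F_n] is graded symmetric in F_1,…,F_n, and for all homogeneous Φ, Φ_1,…,Φ_m ∈ W with C(Φ_1) = ⋯ = C(Φ_m) = 0 one has Φ⟨Φ_1,…,Φ_m⟩[F_1,…,F_n] = Σ ε · Φ[Φ_1[F_{i^1_1},…,F_{i^1_{t_1}}], …, Φ_m[F_{i^m_1},…,F_{i^m_{t_m}}], F_{i^{m+1}_1},…,F_{i^{m+1}_{t_{m+1}}}], where the sum runs over all unshuffle decompositions i^1_1<⋯<i^1_{t_1}, …, i^{m+1}_1<⋯<i^{m+1}_{t_{m+1}} of {1,…,n} with t_1,…,t_m ≥ 1 and t_{m+1} ≥ 0, and ε is the Koszul sign of the corresponding permutation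 of F_1,…,F_n. -/

import Mathlib

/-!
Statement 4: with `W`, `W'`, `A`, `C` as in Statement 3, the induced brace
`Φ[F_1,…,F_n] := C(Φ⟨A F_1,…,A F_n⟩)` on `W'` is graded symmetric in the
`F`'s, and `W'` behaves as a left module over the symmetric brace algebra `W`
on elements `Φ_1, …, Φ_m` annihilated by `C`.
-/

open scoped BigOperators

/-- The Koszul sign of a permutation `σ` acting on graded elements whose
degrees are recorded by `d` (the sign picked up when rearranging
`(y 0, …, y (n-1))` into `(y (σ 0), …, y (σ (n-1)))`). -/
def koszulSign {n : ℕ} (d : Fin n → ℤ) (σ : Equiv.Perm (Fin n)) : ℤˣ :=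
  ∏ p ∈ Finset.univ.filter
      (fun p : Fin n × Fin n => p.1 < p.2 ∧ σ p.2 < σ p.1),
    (-1 : ℤˣ) ^ (d (σ p.1) * d (σ p.2))

/-- An "unshuffle decomposition" of `{1,…,n}` into `m + 1` blocks is encoded
by the function `g : Fin n → Fin (m+1)` assigning to each index its block;
the elements of each block are taken in increasing order.  `blockCard g j`
is the size `t_j` of the `j`-th block. -/
def blockCard {n m : ℕ} (g : Fin n → Fin (m + 1)) (j : Fin (m + 1)) : ℕ :=
  (Finset.univ.filter fun b => g b = j).card

/-- The increasing enumeration `i^j_1 < ⋯ < i^j_{t_j}` of the `j`-th block. -/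
def blockEmb {n m : ℕ} (g : Fin n → Fin (m + 1)) (j : Fin (m + 1))
    (a : Fin (blockCard g j)) : Fin n :=
  ((Finset.univ.filter fun b => g b = j).orderIsoOfFin rfl a : Fin n)

/-- The permutation of `{1,…,n}` corresponding to the unshuffle decomposition
`g`: it lists the elements of block `0`, then of block `1`, …, each block in
increasing order (obtained by sorting indices by block lexicographically). -/
def sortPerm {n m : ℕ} (g : Fin n → Fin (m + 1)) : Equiv.Perm (Fin n) :=
  Tuple.sort (fun b => (toLex (g b, b) : Lex (Fin (m + 1) × Fin n)))

/-- A symmetric brace algebra over `k`: a ℤ-graded vector space `W` with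
multilinear degree-0 graded-symmetric braces `x⟨x_1,…,x_n⟩` such that
`x⟨⟩ = x` and the brace axiom holds. -/
structure SymmBraceAlg (k : Type*) (W : Type*) [Field k] [AddCommGroup W]
    [Module k W] where
  grading : ℤ → Submodule k W
  internal : DirectSum.IsInternal grading
  brace : ∀ n : ℕ, W → (Fin n → W) → W
  /-- multilinearity in the first argument -/
  brace_add_left : ∀ (n : ℕ) (x x' : W) (y : Fin n → W),
    brace n (x + x') y = brace n x y + brace n x' y
  brace_smul_left : ∀ (n : ℕ) (c : k) (x : W) (y : Fin n → W),
    brace n (c • x) y = c • brace n x y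
  /-- multilinearity in each of the remaining arguments -/
  brace_add_slot : ∀ (n : ℕ) (x : W) (y : Fin n → W) (i : Fin n) (u v : W),
    brace n x (Function.update y i (u + v)) =
      brace n x (Function.update y i u) + brace n x (Function.update y i v)
  brace_smul_slot : ∀ (n : ℕ) (x : W) (y : Fin n → W) (i : Fin n) (c : k) (u : W),
    brace n x (Function.update y i (c • u)) =
      c • brace n x (Function.update y i u)
  /-- the braces have degree 0 -/
  brace_degree : ∀ (n : ℕ) (dx : ℤ) (dy : Fin n → ℤ) (x : W) (y : Fin n → W),
    x ∈ grading dx → (∀ i, y i ∈ grading (dy i)) →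
    brace n x y ∈ grading (dx + ∑ i, dy i)
  /-- graded symmetry in `x_1, …, x_n` -/
  brace_symm : ∀ (n : ℕ) (dy : Fin n → ℤ) (x : W) (y : Fin n → W),
    (∀ i, y i ∈ grading (dy i)) → ∀ σ : Equiv.Perm (Fin n),
      brace n x (fun i => y (σ i)) = (koszulSign dy σ : ℤ) • brace n x y
  /-- `x⟨⟩ = x` -/
  brace_empty : ∀ (x : W) (y : Fin 0 → W), brace 0 x y = x
  /-- the brace axiom: `x⟨x_1,…,x_m⟩⟨y_1,…,y_n⟩` is the sum, over all
  unshuffle decompositions of `{1,…,n}` into `m + 1` blocks, of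
  `ε • x⟨x_1⟨block 1⟩,…,x_m⟨block m⟩, block (m+1)⟩`, `ε` being the Koszul
  sign of the corresponding permutation of the graded elements `y`. -/
  brace_axiom : ∀ (m n : ℕ) (dy : Fin n → ℤ) (x : W) (xs : Fin m → W)
    (y : Fin n → W), (∀ i, y i ∈ grading (dy i)) →
    brace n (brace m x xs) y =
      ∑ g : Fin n → Fin (m + 1),
        (koszulSign dy (sortPerm g) : ℤ) •
          brace (m + blockCard g (Fin.last m)) x
            (Fin.append
              (fun i : Fin m =>
                brace (blockCard g i.castSucc) (xs i)
                  (fun a => y (blockEmb g i.castSucc a)))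
              (fun a => y (blockEmb g (Fin.last m) a)))

/-- The induced brace `Φ[F_1,…,F_n] := C(Φ⟨A F_1,…,A F_n⟩) ∈ W'`. -/
def mbrace {k W W' : Type} [Field k] [AddCommGroup W] [Module k W]
    [AddCommGroup W'] [Module k W'] (B : SymmBraceAlg k W)
    (A : W' →ₗ[k] W) (C : W →ₗ[k] W') (n : ℕ) (Φ : W) (F : Fin n → W') : W' :=
  C (B.brace n Φ fun i => A (F i))

section Helpers

variable {k W W' : Type} [Field k] [AddCommGroup W] [Module k W]
  [AddCommGroup W'] [Module k W']

lemma koszulSign_fin_one (d : Fin 1 → ℤ) (σ : Equiv.Perm (Fin 1)) :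
    koszulSign d σ = 1 := by
  unfold koszulSign
  rw [Finset.filter_false_of_mem, Finset.prod_empty]
  intro p _
  simp [Subsingleton.elim p.1 p.2]

variable (B : SymmBraceAlg k W)

lemma brace_card_zero {c : ℕ} (h : c = 0) (x : W) (y : Fin c → W) :
    B.brace c x y = x := by
  subst h; exact B.brace_empty x y

lemma brace_zero_slot (n : ℕ) (x : W) (y : Fin n → W) (j : Fin n)
    (hy : y j = 0) : B.brace n x y = 0 := by
  have h0 : y = Function.update y j ((0 : k) • (0 : W)) := by
    rw [smul_zero, ← hy, Function.update_eq_self]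
  rw [h0, B.brace_smul_slot, zero_smul]

lemma brace_card_one {c : ℕ} (h : c = 1) (x φ : W) (y : Fin c → W)
    (hy : ∀ a, y a = φ) : B.brace c x y = B.brace 1 x ![φ] := by
  subst h
  congr 1
  funext a
  rw [hy a, Matrix.cons_val_fin_one]

lemma brace_append_zero {n c : ℕ} (h : c = 0) (x : W) (f : Fin n → W)
    (g : Fin c → W) : B.brace (n + c) x (Fin.append f g) = B.brace n x f := by
  subst h
  rw [show g = Fin.elim0 from funext fun i => i.elim0, Fin.append_elim0]
  rfl

lemma brace_append_one {n c : ℕ} (h : c = 1) (x φ : W) (f : Fin n → W)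
    (g : Fin c → W) (hg : ∀ a, g a = φ) :
    B.brace (n + c) x (Fin.append f g) = B.brace (n + 1) x (Fin.snoc f φ) := by
  subst h
  rw [Fin.append_right_eq_snoc, hg 0]

lemma blockCard_const {m : ℕ} (j j' : Fin (m + 1)) :
    blockCard (fun _ : Fin 1 => j) j' = if j = j' then 1 else 0 := by
  unfold blockCard
  split
  · next h => rw [Finset.filter_true_of_mem (fun _ _ => h)]; simp
  · next h => rw [Finset.filter_false_of_mem (fun _ _ => h)]; simp

end Helpers
section Core

variable {k W W' : Type} [Field k] [AddCommGroup W] [Module k W]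
  [AddCommGroup W'] [Module k W']
  (B : SymmBraceAlg k W) (A : W' →ₗ[k] W) (C : W →ₗ[k] W')

lemma C_brace_one_eq_zero
    (h2 : ∀ (dθ dφ : ℤ) (θ φ : W), θ ∈ B.grading dθ → φ ∈ B.grading dφ →
      C (B.brace 1 θ ![A (C φ)]) = C (B.brace 1 θ ![φ]))
    (dθ dφ : ℤ) (θ φ : W) (hθ : θ ∈ B.grading dθ) (hφ : φ ∈ B.grading dφ)
    (hCφ : C φ = 0) : C (B.brace 1 θ ![φ]) = 0 := by
  rw [← h2 dθ dφ θ φ hθ hφ, hCφ, map_zero,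
    brace_zero_slot (k := k) B 1 θ ![(0:W)] 0 rfl, map_zero]

lemma C_brace_kerC_slot
    (h2 : ∀ (dθ dφ : ℤ) (θ φ : W), θ ∈ B.grading dθ → φ ∈ B.grading dφ →
      C (B.brace 1 θ ![A (C φ)]) = C (B.brace 1 θ ![φ])) :
    ∀ (n : ℕ) (dθ : ℤ) (dz : Fin n → ℤ) (θ : W) (z : Fin n → W) (j : Fin n),
      θ ∈ B.grading dθ → (∀ i, z i ∈ B.grading (dz i)) → C (z j) = 0 →
      C (B.brace n θ z) = 0 := by
  intro n
  induction n with
  | zero => intro _ _ _ _ j; exact j.elim0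
  | succ n' IH =>
    intro dθ dz θ z j hθ hz hCz
    -- first handle the case `j = last`
    suffices H : ∀ (dz : Fin (n' + 1) → ℤ) (z : Fin (n' + 1) → W),
        (∀ i, z i ∈ B.grading (dz i)) → C (z (Fin.last n')) = 0 →
        C (B.brace (n' + 1) θ z) = 0 by
      have hsymm := B.brace_symm (n' + 1) dz θ z hz (Equiv.swap j (Fin.last n'))
      have h0 : C (B.brace (n' + 1) θ
          (fun i => z (Equiv.swap j (Fin.last n') i))) = 0 := by
        refine H (fun i => dz (Equiv.swap j (Fin.last n') i)) _
          (fun i => hz _) ?_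
        simpa [Equiv.swap_apply_right] using hCz
      rw [hsymm, map_zsmul] at h0
      rcases Int.units_eq_one_or (koszulSign dz (Equiv.swap j (Fin.last n')))
        with h | h <;> simp [h] at h0 <;> simpa using h0
    intro dz z hz hCφ
    have hΨ : B.brace n' θ (fun i => z i.castSucc) ∈
        B.grading (dθ + ∑ i : Fin n', dz i.castSucc) :=
      B.brace_degree n' dθ (fun i : Fin n' => dz i.castSucc) θ (fun i : Fin n' => z i.castSucc) hθ (fun i => hz _)
    have hlhs : C (B.brace 1 (B.brace n' θ (fun i => z i.castSucc))
        ![z (Fin.last n')]) = 0 :=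
      C_brace_one_eq_zero B A C h2 _ (dz (Fin.last n')) _ _ hΨ
        (hz _) hCφ
    have hax := B.brace_axiom n' 1 (fun _ => dz (Fin.last n')) θ
      (fun i => z i.castSucc) ![z (Fin.last n')]
      (fun i => by rw [Matrix.cons_val_fin_one]; exact hz _)
    rw [hax, map_sum] at hlhs
    simp only [map_zsmul] at hlhs
    rw [Fintype.sum_eq_single (fun _ : Fin 1 => Fin.last n') ?other] at hlhs
    case other =>
      intro g hg
      -- g is constant with value some `castSucc j''`
      obtain ⟨j'', hj''⟩ : ∃ j'' : Fin n', g = fun _ => Fin.castSucc j'' := by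
        have hne : g 0 ≠ Fin.last n' := by
          intro h
          exact hg (funext fun a => by rw [Subsingleton.elim a 0, h])
        rcases Fin.exists_castSucc_eq.mpr hne with ⟨j'', h⟩
        exact ⟨j'', funext fun a => by rw [Subsingleton.elim a 0, ← h]⟩
      subst hj''
      have hcl : blockCard (fun _ : Fin 1 => Fin.castSucc j'') (Fin.last n') = 0 := by
        rw [blockCard_const, if_neg (Fin.ne_last_of_lt (Fin.castSucc_lt_last j''))]
      rw [brace_append_zero (k := k) B hcl]
      have hmain : C (B.brace n' θ (fun i =>
          B.brace (blockCard (fun _ : Fin 1 => Fin.castSucc j'') i.castSucc)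
            ((fun i => z i.castSucc) i)
            (fun a => ![z (Fin.last n')]
              (blockEmb (fun _ : Fin 1 => Fin.castSucc j'') i.castSucc a)))) = 0 := by
        have hf1 : ∀ i : Fin n',
            B.brace (blockCard (fun _ : Fin 1 => Fin.castSucc j'') i.castSucc)
              (z i.castSucc)
              (fun a => ![z (Fin.last n')]
                (blockEmb (fun _ : Fin 1 => Fin.castSucc j'') i.castSucc a)) =
            if i = j'' then B.brace 1 (z j''.castSucc) ![z (Fin.last n')]
            else z i.castSucc := by
          intro i
          by_cases h : i = j''
          · subst h
            rw [if_pos rfl]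
            exact brace_card_one (k := k) B
              (by rw [blockCard_const, if_pos rfl]) _ _ _
              (fun a => Matrix.cons_val_fin_one _ _ _)
          · rw [if_neg h]
            exact brace_card_zero (k := k) B
              (by rw [blockCard_const,
                if_neg (fun he => h (Fin.castSucc_injective _ he).symm)]) _ _
        refine IH dθ
          (fun i => if i = j'' then dz j''.castSucc + dz (Fin.last n')
            else dz i.castSucc) θ _ j'' hθ ?_ ?_
        · intro i
          rw [hf1 i]
          by_cases h : i = j''
          · subst h
            simp only [if_pos rfl]
            have := B.brace_degree 1 (dz i.castSucc)
              (fun _ => dz (Fin.last n')) (z i.castSucc) ![z (Fin.last n')]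
              (hz _) (fun a => by rw [Matrix.cons_val_fin_one]; exact hz _)
            simpa using this
          · simp only [if_neg h]; exact hz _
        · simp only [hf1, if_pos rfl]
          exact C_brace_one_eq_zero B A C h2 (dz j''.castSucc)
            (dz (Fin.last n')) _ _ (hz _) (hz _) hCφ
      rw [hmain, smul_zero]
    -- the remaining term
    rw [koszulSign_fin_one] at hlhs
    have hcl : blockCard (fun _ : Fin 1 => Fin.last n') (Fin.last n') = 1 := by
      rw [blockCard_const, if_pos rfl]
    rw [brace_append_one (k := k) B hcl θ (z (Fin.last n')) _ _
      (fun a => Matrix.cons_val_fin_one _ _ _)] at hlhs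
    have hf1 : (fun i : Fin n' =>
        B.brace (blockCard (fun _ : Fin 1 => Fin.last n') i.castSucc)
          ((fun i => z i.castSucc) i)
          (fun a => ![z (Fin.last n')]
            (blockEmb (fun _ : Fin 1 => Fin.last n') i.castSucc a))) =
        (fun i : Fin n' => z i.castSucc) := by
      funext i
      exact brace_card_zero (k := k) B
        (by rw [blockCard_const,
          if_neg (Fin.ne_last_of_lt (Fin.castSucc_lt_last i)).symm]) _ _
    rw [hf1] at hlhs
    have hsnoc : Fin.snoc (fun i : Fin n' => z i.castSucc) (z (Fin.last n')) = z :=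
      Fin.snoc_init_self z
    rw [hsnoc, Units.val_one, one_smul] at hlhs
    exact hlhs

end Core
section Repl

variable {k W W' : Type} [Field k] [AddCommGroup W] [Module k W]
  [AddCommGroup W'] [Module k W']
  (B : SymmBraceAlg k W) (A : W' →ₗ[k] W) (C : W →ₗ[k] W')

lemma C_brace_replace
    (hAC : ∀ (d : ℤ) (x : W), x ∈ B.grading d → A (C x) ∈ B.grading d)
    (hCA : ∀ x : W', C (A x) = x)
    (h2 : ∀ (dθ dφ : ℤ) (θ φ : W), θ ∈ B.grading dθ → φ ∈ B.grading dφ →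
      C (B.brace 1 θ ![A (C φ)]) = C (B.brace 1 θ ![φ]))
    (n : ℕ) (dθ : ℤ) (dz : Fin n → ℤ) (θ : W) (z : Fin n → W) (j : Fin n)
    (hθ : θ ∈ B.grading dθ) (hz : ∀ i, z i ∈ B.grading (dz i)) :
    C (B.brace n θ (Function.update z j (A (C (z j))))) = C (B.brace n θ z) := by
  have hsplit := B.brace_add_slot n θ z j (A (C (z j))) (z j - A (C (z j)))
  have e1 : A (C (z j)) + (z j - A (C (z j))) = z j := by abel
  rw [e1, Function.update_eq_self] at hsplit
  rw [hsplit, map_add]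
  have h0 : C (B.brace n θ (Function.update z j (z j - A (C (z j))))) = 0 := by
    refine C_brace_kerC_slot B A C h2 n dθ dz θ _ j hθ ?_ ?_
    · intro i
      rcases eq_or_ne i j with rfl | h
      · rw [Function.update_self]
        exact sub_mem (hz i) (hAC _ _ (hz i))
      · rw [Function.update_of_ne h]; exact hz i
    · rw [Function.update_self, map_sub, hCA, sub_self]
  rw [h0, add_zero]

lemma C_brace_replace_finset
    (hAC : ∀ (d : ℤ) (x : W), x ∈ B.grading d → A (C x) ∈ B.grading d)
    (hCA : ∀ x : W', C (A x) = x)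
    (h2 : ∀ (dθ dφ : ℤ) (θ φ : W), θ ∈ B.grading dθ → φ ∈ B.grading dφ →
      C (B.brace 1 θ ![A (C φ)]) = C (B.brace 1 θ ![φ]))
    (n : ℕ) (dθ : ℤ) (dz : Fin n → ℤ) (θ : W) (z : Fin n → W)
    (hθ : θ ∈ B.grading dθ) (hz : ∀ i, z i ∈ B.grading (dz i))
    (S : Finset (Fin n)) :
    C (B.brace n θ (fun i => if i ∈ S then A (C (z i)) else z i)) =
      C (B.brace n θ z) := by
  classical
  induction S using Finset.induction_on with
  | empty => simp
  | @insert a S ha IH =>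
    have hw : ∀ i, (if i ∈ S then A (C (z i)) else z i) ∈ B.grading (dz i) := by
      intro i
      split
      · exact hAC _ _ (hz i)
      · exact hz i
    have hupd : (fun i => if i ∈ insert a S then A (C (z i)) else z i) =
        Function.update (fun i => if i ∈ S then A (C (z i)) else z i) a
          (A (C ((fun i => if i ∈ S then A (C (z i)) else z i) a))) := by
      funext i
      rcases eq_or_ne i a with rfl | h
      · simp [Function.update_self, ha]
      · simp [Function.update_of_ne h, Finset.mem_insert, h]
    rw [hupd, C_brace_replace B A C hAC hCA h2 n dθ dz θ
      (fun i => if i ∈ S then A (C (z i)) else z i) a hθ hw, IH]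

end Repl
theorem statement4
    {k W W' : Type} [Field k] [AddCommGroup W] [Module k W]
    [AddCommGroup W'] [Module k W']
    (B : SymmBraceAlg k W)
    -- `W'` is a graded vector space:
    (grading' : ℤ → Submodule k W') (internal' : DirectSum.IsInternal grading')
    -- `A` and `C` are degree-0 linear maps with `C ∘ A = id`:
    (A : W' →ₗ[k] W) (C : W →ₗ[k] W')
    (hA : ∀ (d : ℤ) (x : W'), x ∈ grading' d → A x ∈ B.grading d)
    (hC : ∀ (d : ℤ) (x : W), x ∈ B.grading d → C x ∈ grading' d)
    (hCA : ∀ x : W', C (A x) = x)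
    (h1 : ∀ (dθ dφ : ℤ) (θ φ : W), θ ∈ B.grading dθ → φ ∈ B.grading dφ →
      B.brace 1 (A (C θ)) ![φ] = 0)
    (h2 : ∀ (dθ dφ : ℤ) (θ φ : W), θ ∈ B.grading dθ → φ ∈ B.grading dφ →
      C (B.brace 1 θ ![A (C φ)]) = C (B.brace 1 θ ![φ])) :
    -- (a) `Φ[F_1,…,F_n]` is graded symmetric in `F_1, …, F_n`:
    (∀ (n : ℕ) (dF : Fin n → ℤ) (Φ : W) (F : Fin n → W'),
      (∀ i, F i ∈ grading' (dF i)) → ∀ σ : Equiv.Perm (Fin n),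
        mbrace B A C n Φ (fun i => F (σ i)) =
          (koszulSign dF σ : ℤ) • mbrace B A C n Φ F) ∧
    -- (b) the left-module identity over the symmetric brace algebra `W`,
    -- for homogeneous `Φ, Φ_1, …, Φ_m` with `C Φ_1 = ⋯ = C Φ_m = 0`; the sum
    -- runs over all unshuffle decompositions of `{1,…,n}` into `m + 1`
    -- blocks whose first `m` blocks are nonempty:
    (∀ (m n : ℕ) (dΦ : ℤ) (dΦs : Fin m → ℤ) (dF : Fin n → ℤ)
      (Φ : W) (Φs : Fin m → W) (F : Fin n → W'),
      Φ ∈ B.grading dΦ → (∀ i, Φs i ∈ B.grading (dΦs i)) →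
      (∀ i, F i ∈ grading' (dF i)) →
      (∀ i, C (Φs i) = 0) →
      mbrace B A C n (B.brace m Φ Φs) F =
        ∑ g ∈ Finset.univ.filter
            (fun g : Fin n → Fin (m + 1) =>
              ∀ i : Fin m, 0 < blockCard g i.castSucc),
          (koszulSign dF (sortPerm g) : ℤ) •
            mbrace B A C (m + blockCard g (Fin.last m)) Φ
              (Fin.append
                (fun i : Fin m =>
                  mbrace B A C (blockCard g i.castSucc) (Φs i)
                    (fun a => F (blockEmb g i.castSucc a)))
                (fun a => F (blockEmb g (Fin.last m) a)))) := by
  classical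
  have hAC : ∀ (d : ℤ) (x : W), x ∈ B.grading d → A (C x) ∈ B.grading d :=
    fun d x hx => hA d (C x) (hC d x hx)
  constructor
  · -- (a) graded symmetry
    intro n dF Φ F hF σ
    have hsymm := B.brace_symm n dF Φ (fun i => A (F i))
      (fun i => hA _ _ (hF i)) σ
    show C (B.brace n Φ fun i => A (F (σ i))) = _
    rw [show (B.brace n Φ fun i => A (F (σ i))) =
        (koszulSign dF σ : ℤ) • B.brace n Φ (fun i => A (F i)) from hsymm,
      map_zsmul]
    rfl
  · -- (b) the left-module identity
    intro m n dΦ dΦs dF Φ Φs F hΦ hΦs hF hCΦs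
    have hy : ∀ i, A (F i) ∈ B.grading (dF i) := fun i => hA _ _ (hF i)
    show C (B.brace n (B.brace m Φ Φs) fun i => A (F i)) = _
    rw [B.brace_axiom m n dF Φ Φs (fun i => A (F i)) hy, map_sum]
    simp only [map_zsmul]
    -- homogeneity of the appended slot functions
    have hYdeg : ∀ (g : Fin n → Fin (m + 1))
        (idx : Fin (m + blockCard g (Fin.last m))),
        Fin.append
          (fun i : Fin m => B.brace (blockCard g i.castSucc) (Φs i)
            (fun a => A (F (blockEmb g i.castSucc a))))
          (fun a => A (F (blockEmb g (Fin.last m) a))) idx ∈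
        B.grading (Fin.append
          (fun i : Fin m => dΦs i + ∑ a, dF (blockEmb g i.castSucc a))
          (fun a => dF (blockEmb g (Fin.last m) a)) idx) := by
      intro g idx
      refine Fin.addCases (fun i => ?_) (fun a => ?_) idx
      · rw [Fin.append_left, Fin.append_left]
        exact B.brace_degree _ _ _ _ _ (hΦs i) (fun a => hy _)
      · rw [Fin.append_right, Fin.append_right]
        exact hy _
    -- terms with an empty block among the first `m` blocks vanish
    have hvanish : ∀ (g : Fin n → Fin (m + 1)) (i₀ : Fin m),
        blockCard g i₀.castSucc = 0 →
        C (B.brace (m + blockCard g (Fin.last m)) Φ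
          (Fin.append
            (fun i : Fin m => B.brace (blockCard g i.castSucc) (Φs i)
              (fun a => A (F (blockEmb g i.castSucc a))))
            (fun a => A (F (blockEmb g (Fin.last m) a))))) = 0 := by
      intro g i₀ h0
      refine C_brace_kerC_slot B A C h2 _ dΦ _ Φ _
        (Fin.castAdd (blockCard g (Fin.last m)) i₀) hΦ (hYdeg g) ?_
      rw [Fin.append_left, brace_card_zero (k := k) B h0]
      exact hCΦs i₀
    -- each surviving term equals the corresponding `mbrace` term
    have hterm : ∀ g : Fin n → Fin (m + 1),
        C (B.brace (m + blockCard g (Fin.last m)) Φ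
          (Fin.append
            (fun i : Fin m => B.brace (blockCard g i.castSucc) (Φs i)
              (fun a => A (F (blockEmb g i.castSucc a))))
            (fun a => A (F (blockEmb g (Fin.last m) a))))) =
        mbrace B A C (m + blockCard g (Fin.last m)) Φ
          (Fin.append
            (fun i : Fin m =>
              mbrace B A C (blockCard g i.castSucc) (Φs i)
                (fun a => F (blockEmb g i.castSucc a)))
            (fun a => F (blockEmb g (Fin.last m) a))) := by
      intro g
      rw [← C_brace_replace_finset B A C hAC hCA h2 _ dΦ _ Φ _ hΦ (hYdeg g)
        (Finset.univ.filter fun idx : Fin (m + blockCard g (Fin.last m)) =>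
          (idx : ℕ) < m)]
      show _ = C (B.brace (m + blockCard g (Fin.last m)) Φ
        (fun idx => A (Fin.append
          (fun i : Fin m =>
            mbrace B A C (blockCard g i.castSucc) (Φs i)
              (fun a => F (blockEmb g i.castSucc a)))
          (fun a => F (blockEmb g (Fin.last m) a)) idx)))
      congr 1
      congr 1
      funext idx
      refine Fin.addCases (fun i => ?_) (fun a => ?_) idx
      · rw [if_pos (by simp [Fin.coe_castAdd, i.isLt]), Fin.append_left,
          Fin.append_left]
        rfl
      · rw [if_neg (by simp), Fin.append_right, Fin.append_right]
  -- putting it together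
    rw [← Finset.sum_subset
      (Finset.filter_subset (fun g : Fin n → Fin (m + 1) =>
        ∀ i : Fin m, 0 < blockCard g i.castSucc) Finset.univ) ?outside]
    case outside =>
      intro g _ hg
      simp only [Finset.mem_filter, Finset.mem_univ, true_and, not_forall,
        not_lt] at hg
      obtain ⟨i₀, hi₀⟩ := hg
      exact (congrArg (fun w : W' => (koszulSign dF (sortPerm g) : ℤ) • w)
        (hvanish g i₀ (Nat.le_zero.mp hi₀))).trans (smul_zero _)
    refine Finset.sum_congr rfl ?_
    intro g _
    exact congrArg (fun w : W' => (koszulSign dF (sortPerm g) : ℤ) • w) (hterm g)
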